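/- arXiv:1207.1017 — 2 statements merged into one kernel-verified Lean document; each statement's English description precedes it below -/
import Mathlib

section
/- Let φ ∈ L^p(ℝ³,ℝ) for some 3 ≤ p < ∞, and let D_φ = -iσ·∇ + i(m+gφ) on H¹(ℝ³,ℂ²). Then dim ker(D_φ* D_φ) = dim ker(D_φ D_φ*). Concretely, the map sending ω = (u,v)ᵀ ∈ ker(D_φ* D_φ) to ω̃ = (v̄, -ū)ᵀ defines an antilinear bijection between ker(D_φ* D_φ) and ker(D_φ D_φ*). -/
open MeasureTheory ENNReal NNReal

noncomputable section

abbrev R3 : Type := EuclideanSpace ℝ (Fin 3)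
abbrev C2 : Type := EuclideanSpace ℂ (Fin 2)

def pauli : Fin 3 → Matrix (Fin 2) (Fin 2) ℂ
  | 0 => !![0, 1; 1, 0]
  | 1 => !![0, -Complex.I; Complex.I, 0]
  | 2 => !![1, 0; 0, -1]

def matApply (A : Matrix (Fin 2) (Fin 2) ℂ) (v : C2) : C2 :=
  WithLp.toLp 2 (fun i => ∑ j, A i j * v j)

def sigmaGrad (ω : R3 → C2) (x : R3) : C2 :=
  ∑ k : Fin 3, matApply (pauli k) (fderiv ℝ ω x (EuclideanSpace.single k 1))

def MemH1 (ω : R3 → C2) : Prop :=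
  Differentiable ℝ ω ∧ MemLp ω 2 volume ∧ MemLp (fun x => fderiv ℝ ω x) 2 volume

def Dop (m g : ℝ) (φ : R3 → ℝ) (ω : R3 → C2) (x : R3) : C2 :=
  (-Complex.I) • sigmaGrad ω x + (Complex.I * ((m : ℂ) + (g : ℂ) * (φ x : ℂ))) • ω x

def DopStar (m g : ℝ) (φ : R3 → ℝ) (ω : R3 → C2) (x : R3) : C2 :=
  (-Complex.I) • sigmaGrad ω x - (Complex.I * ((m : ℂ) + (g : ℂ) * (φ x : ℂ))) • ω x

/-- The antilinear map `(u,v)ᵀ ↦ (v̄, -ū)ᵀ` applied pointwise. -/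
def conjFlip (ω : R3 → C2) : R3 → C2 :=
  fun x => WithLp.toLp 2 ![(starRingEnd ℂ) (ω x 1), -((starRingEnd ℂ) (ω x 0))]

/-- The kernel of `D_φ* D_φ` (inside `H¹`). -/
def kerDstarD (m g : ℝ) (φ : R3 → ℝ) : Set (R3 → C2) :=
  {ω | MemH1 ω ∧ MemH1 (Dop m g φ ω) ∧ ∀ x, DopStar m g φ (Dop m g φ ω) x = 0}

/-- The kernel of `D_φ D_φ*` (inside `H¹`). -/
def kerDDstar (m g : ℝ) (φ : R3 → ℝ) : Set (R3 → C2) :=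
  {ω | MemH1 ω ∧ MemH1 (DopStar m g φ ω) ∧ ∀ x, Dop m g φ (DopStar m g φ ω) x = 0}

section Aux
variable {m g : ℝ} {φ : R3 → ℝ}

def LmapLin : C2 →ₗ[ℝ] C2 where
  toFun v := WithLp.toLp 2 ![(starRingEnd ℂ) (v 1), -((starRingEnd ℂ) (v 0))]
  map_add' u v := by
    ext i
    fin_cases i <;>
      (simp [PiLp.add_apply, Matrix.cons_val_zero, Matrix.cons_val_one, Matrix.head_cons];
       try ring)
  map_smul' r v := by
    ext i
    fin_cases i <;>
      simp [PiLp.smul_apply, Complex.real_smul, map_mul, Complex.conj_ofReal,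
        Matrix.cons_val_zero, Matrix.cons_val_one, Matrix.head_cons]

def Lmap : C2 →L[ℝ] C2 := LinearMap.toContinuousLinearMap LmapLin

lemma Lmap_apply (v : C2) : Lmap v = WithLp.toLp 2 ![(starRingEnd ℂ) (v 1), -((starRingEnd ℂ) (v 0))] := rfl

lemma conjFlip_eq (ω : R3 → C2) : conjFlip ω = fun x => Lmap (ω x) := rfl

lemma matApply_Lmap (k : Fin 3) (v : C2) :
    matApply (pauli k) (Lmap v) = - Lmap (matApply (pauli k) v) := by
  fin_cases k <;> ext i <;> fin_cases i <;>
    simp [matApply, pauli, Lmap_apply, Fin.sum_univ_two, Complex.conj_I, map_mul, map_add,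
      Matrix.cons_val_zero, Matrix.cons_val_one, Matrix.head_cons, PiLp.neg_apply] <;> ring

lemma Lmap_smulc (c : ℂ) (v : C2) : Lmap (c • v) = (starRingEnd ℂ c) • Lmap v := by
  ext i
  fin_cases i <;>
    simp [Lmap_apply, PiLp.smul_apply, map_mul, smul_eq_mul,
      Matrix.cons_val_zero, Matrix.cons_val_one, Matrix.head_cons] <;> ring

lemma fderiv_conjFlip {ω : R3 → C2} (hω : Differentiable ℝ ω) (x : R3) :
    fderiv ℝ (conjFlip ω) x = Lmap.comp (fderiv ℝ ω x) :=
  (Lmap.hasFDerivAt.comp x (hω x).hasFDerivAt).fderiv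

lemma sigmaGrad_conjFlip {ω : R3 → C2} (hω : Differentiable ℝ ω) (x : R3) :
    sigmaGrad (conjFlip ω) x = - Lmap (sigmaGrad ω x) := by
  unfold sigmaGrad
  rw [map_sum, ← Finset.sum_neg_distrib]
  refine Finset.sum_congr rfl fun k _ => ?_
  rw [fderiv_conjFlip hω x, ContinuousLinearMap.comp_apply, matApply_Lmap]

lemma DopStar_conjFlip {ω : R3 → C2} (hω : Differentiable ℝ ω) (x : R3) :
    DopStar m g φ (conjFlip ω) x = conjFlip (Dop m g φ ω) x := by
  show DopStar m g φ (conjFlip ω) x = Lmap (Dop m g φ ω x)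
  unfold DopStar Dop
  rw [sigmaGrad_conjFlip hω x, map_add, Lmap_smulc, Lmap_smulc]
  have h1 : (starRingEnd ℂ) (-Complex.I) = Complex.I := by simp
  have h2 : (starRingEnd ℂ) (Complex.I * ((m : ℂ) + (g : ℂ) * (φ x : ℂ)))
      = -(Complex.I * ((m : ℂ) + (g : ℂ) * (φ x : ℂ))) := by
    simp [map_mul, map_add, Complex.conj_I, Complex.conj_ofReal]
  rw [h1, h2]
  have e3 : conjFlip ω x = Lmap (ω x) := rfl
  rw [e3]
  module

lemma Dop_conjFlip {ω : R3 → C2} (hω : Differentiable ℝ ω) (x : R3) :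
    Dop m g φ (conjFlip ω) x = conjFlip (DopStar m g φ ω) x := by
  show Dop m g φ (conjFlip ω) x = Lmap (DopStar m g φ ω x)
  unfold DopStar Dop
  rw [sigmaGrad_conjFlip hω x, map_sub, Lmap_smulc, Lmap_smulc]
  have h1 : (starRingEnd ℂ) (-Complex.I) = Complex.I := by simp
  have h2 : (starRingEnd ℂ) (Complex.I * ((m : ℂ) + (g : ℂ) * (φ x : ℂ)))
      = -(Complex.I * ((m : ℂ) + (g : ℂ) * (φ x : ℂ))) := by
    simp [map_mul, map_add, Complex.conj_I, Complex.conj_ofReal]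
  rw [h1, h2]
  have e3 : conjFlip ω x = Lmap (ω x) := rfl
  rw [e3]
  module

lemma MemH1_conjFlip {ω : R3 → C2} (h : MemH1 ω) : MemH1 (conjFlip ω) := by
  obtain ⟨h1, h2, h3⟩ := h
  refine ⟨?_, ?_, ?_⟩
  · rw [conjFlip_eq]; exact Lmap.differentiable.comp h1
  · rw [conjFlip_eq]; exact Lmap.comp_memLp' h2
  · have e : (fun x => fderiv ℝ (conjFlip ω) x)
        = fun x => (ContinuousLinearMap.compL ℝ R3 C2 C2 Lmap) (fderiv ℝ ω x) :=
      funext fun x => fderiv_conjFlip h1 x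
    rw [e]
    exact (ContinuousLinearMap.compL ℝ R3 C2 C2 Lmap).comp_memLp' h3

lemma matApply_neg (A : Matrix (Fin 2) (Fin 2) ℂ) (v : C2) :
    matApply A (-v) = - matApply A v := by
  ext i
  simp [matApply, PiLp.neg_apply, mul_neg, Finset.sum_neg_distrib]

lemma sigmaGrad_neg (ω : R3 → C2) (x : R3) : sigmaGrad (-ω) x = - sigmaGrad ω x := by
  unfold sigmaGrad
  have e : fderiv ℝ (-ω) x = -fderiv ℝ ω x := fderiv_neg
  rw [e, ← Finset.sum_neg_distrib]
  refine Finset.sum_congr rfl fun k _ => ?_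
  rw [ContinuousLinearMap.neg_apply, matApply_neg]

lemma Dop_neg (ω : R3 → C2) : Dop m g φ (-ω) = -(Dop m g φ ω) := by
  funext x
  show Dop m g φ (-ω) x = -(Dop m g φ ω x)
  unfold Dop
  rw [sigmaGrad_neg]
  show _ + _ • (-(ω x)) = _
  rw [smul_neg, smul_neg, neg_add]

lemma DopStar_neg (ω : R3 → C2) : DopStar m g φ (-ω) = -(DopStar m g φ ω) := by
  funext x
  show DopStar m g φ (-ω) x = -(DopStar m g φ ω x)
  unfold DopStar
  rw [sigmaGrad_neg]
  show _ - _ • (-(ω x)) = _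
  rw [smul_neg, smul_neg, sub_neg_eq_add, neg_sub, neg_smul]
  abel

lemma MemH1_neg {ω : R3 → C2} (h : MemH1 ω) : MemH1 (-ω) := by
  obtain ⟨h1, h2, h3⟩ := h
  refine ⟨h1.neg, h2.neg, ?_⟩
  have e : (fun x => fderiv ℝ (-ω) x) = fun x => -(fderiv ℝ ω x) :=
    funext fun x => fderiv_neg
  rw [e]
  exact h3.neg

lemma conjFlip_conjFlip (ω : R3 → C2) : conjFlip (conjFlip ω) = -ω := by
  funext x
  ext i
  fin_cases i <;>
    simp [conjFlip, PiLp.neg_apply, Pi.neg_apply,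
      Matrix.cons_val_zero, Matrix.cons_val_one, Matrix.head_cons]

lemma mapsTo_DstarD {ω : R3 → C2} (h : ω ∈ kerDstarD m g φ) :
    conjFlip ω ∈ kerDDstar m g φ := by
  obtain ⟨h1, h2, h3⟩ := h
  have e1 : DopStar m g φ (conjFlip ω) = conjFlip (Dop m g φ ω) :=
    funext (DopStar_conjFlip h1.1)
  refine ⟨MemH1_conjFlip h1, by rw [e1]; exact MemH1_conjFlip h2, ?_⟩
  intro x
  rw [e1, Dop_conjFlip h2.1, conjFlip_eq]
  show Lmap (DopStar m g φ (Dop m g φ ω) x) = 0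
  rw [h3 x, map_zero]

lemma mapsTo_DDstar {ω : R3 → C2} (h : ω ∈ kerDDstar m g φ) :
    conjFlip ω ∈ kerDstarD m g φ := by
  obtain ⟨h1, h2, h3⟩ := h
  have e1 : Dop m g φ (conjFlip ω) = conjFlip (DopStar m g φ ω) :=
    funext (Dop_conjFlip h1.1)
  refine ⟨MemH1_conjFlip h1, by rw [e1]; exact MemH1_conjFlip h2, ?_⟩
  intro x
  rw [e1, DopStar_conjFlip h2.1, conjFlip_eq]
  show Lmap (Dop m g φ (DopStar m g φ ω) x) = 0
  rw [h3 x, map_zero]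

lemma neg_mem_DDstar {ω : R3 → C2} (h : ω ∈ kerDDstar m g φ) :
    -ω ∈ kerDDstar m g φ := by
  obtain ⟨h1, h2, h3⟩ := h
  refine ⟨MemH1_neg h1, by rw [DopStar_neg]; exact MemH1_neg h2, ?_⟩
  intro x
  rw [DopStar_neg, Dop_neg]
  show -(Dop m g φ (DopStar m g φ ω) x) = 0
  rw [h3 x, neg_zero]

end Aux

/-- the map `ω = (u,v)ᵀ ↦ ω̃ = (v̄, -ū)ᵀ` is an antilinear bijection between
`ker(D_φ* D_φ)` and `ker(D_φ D_φ*)`; in particular the two kernels have the same dimension. -/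
theorem dim_ker_DstarD_eq_dim_ker_DDstar
    (m g : ℝ) (hm : 0 < m) (hg : 0 < g)
    (p : ℝ≥0∞) (hp1 : 3 ≤ p) (hp2 : p ≠ ⊤)
    (φ : R3 → ℝ) (hφ : MemLp φ p volume) :
    Set.BijOn conjFlip (kerDstarD m g φ) (kerDDstar m g φ) ∧
    (∀ ω ω' : R3 → C2, conjFlip (ω + ω') = conjFlip ω + conjFlip ω') ∧
    (∀ (c : ℂ) (ω : R3 → C2), conjFlip (c • ω) = (starRingEnd ℂ c) • conjFlip ω) := by
  refine ⟨⟨fun ω h => mapsTo_DstarD h, ?_, ?_⟩, ?_, ?_⟩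
  · intro a _ b _ hab
    have := congrArg conjFlip hab
    rw [conjFlip_conjFlip, conjFlip_conjFlip] at this
    exact neg_injective this
  · intro η hη
    refine ⟨conjFlip (-η), mapsTo_DDstar (neg_mem_DDstar hη), ?_⟩
    rw [conjFlip_conjFlip, neg_neg]
  · intro ω ω'
    funext x
    ext i
    fin_cases i <;>
      simp [conjFlip, PiLp.add_apply, Pi.add_apply, map_add,
        Matrix.cons_val_zero, Matrix.cons_val_one, Matrix.head_cons] <;> ring
  · intro c ω
    funext x
    ext i
    fin_cases i <;>
      simp [conjFlip, PiLp.smul_apply, Pi.smul_apply, map_mul, smul_eq_mul,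
        Matrix.cons_val_zero, Matrix.cons_val_one, Matrix.head_cons] <;> ring
end
end

section
/- Let ω ∈ H¹(ℝ³,ℂ²) be of the symmetric form ω(x) = v(r)(1,0)ᵀ + u(r)(cos θ, sin θ e^{iφ})ᵀ in spherical coordinates, with support considerations on the ball B(0,R). Then ‖σ·∇ω‖²_{L²(B(0,R))} ≥ ‖∇ω‖²_{L²(B(0,R))}. Equivalently, in radial form: 4π∫₀ᴿ [|u'(r)+2u(r)/r|² + |v'(r)|²] r² dr ≥ 4π∫₀ᴿ [|u'(r)|² + 2|u(r)|²/r² + |v'(r)|²] r² dr. -/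
open MeasureTheory ENNReal NNReal

noncomputable section

namespace SigmaAux

open Complex

noncomputable def E0 : C2 := EuclideanSpace.single 0 (1:ℂ)
noncomputable def Slin : R3 →ₗ[ℝ] C2 where
  toFun x := WithLp.toLp 2 ![((x 2 : ℝ) : ℂ), ((x 0 : ℝ) : ℂ) + Complex.I * ((x 1 : ℝ) : ℂ)]
  map_add' x y := by ext i; fin_cases i <;> (simp [PiLp.add_apply]; try ring)
  map_smul' c x := by
    ext i; fin_cases i <;> (simp [PiLp.smul_apply, Complex.real_smul]; try ring)
noncomputable def S : R3 →L[ℝ] C2 := LinearMap.toContinuousLinearMap Slin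

lemma normC2 (zz : C2) : ‖zz‖^2 = normSq (zz 0) + normSq (zz 1) := by
  rw [EuclideanSpace.norm_eq, Real.sq_sqrt (by positivity)]
  simp [Fin.sum_univ_succ, Complex.sq_norm]

set_option maxHeartbeats 4000000 in
set_option maxRecDepth 100000 in
lemma key_alg (A B C : ℂ) (p q t z X0 X1 r : ℝ)
    (hX0 : X0 = p*r) (hX1 : X1 = q*r) (hz : z = t*r)
    (hpqt : p^2 + q^2 + t^2 = 1) :
    normSq ((C + ↑p*B*(↑X0+I*↑X1)) + (-I)*(I*C + ↑q*B*(↑X0+I*↑X1)) + (↑t*A + C + ↑t*B*↑z))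
    + normSq ((↑p*A + ↑p*B*↑z) + I*(↑q*A + ↑q*B*↑z) - ↑t*B*(↑X0+I*↑X1))
    - ( normSq (↑p*A + ↑p*B*↑z) + normSq (C + ↑p*B*(↑X0+I*↑X1))
      + normSq (↑q*A + ↑q*B*↑z) + normSq (I*C + ↑q*B*(↑X0+I*↑X1))
      + normSq (↑t*A + C + ↑t*B*↑z) + normSq (↑t*B*(↑X0+I*↑X1)) )
    = 4*r*((starRingEnd ℂ B)*C).re + 6*normSq C + 4*((starRingEnd ℂ A)*C).re * t := by
  subst hX0 hX1 hz
  obtain ⟨ar, ai⟩ := A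
  obtain ⟨br, bi⟩ := B
  obtain ⟨cr, ci⟩ := C
  simp only [normSq_apply, add_re, add_im, sub_re, sub_im, mul_re, mul_im, neg_re, neg_im,
    I_re, I_im, ofReal_re, ofReal_im, conj_re, conj_im]
  ring_nf
  linear_combination (4*(br*cr + bi*ci)*r) * hpqt

lemma bridge (u u' A : ℂ) (z r : ℝ) (hr : r ≠ 0) :
    4*r*((starRingEnd ℂ ((u'*↑r - u)/(↑r:ℂ)^2))*(u/↑r)).re + 6*normSq (u/↑r)
     + 4*((starRingEnd ℂ A)*(u/↑r)).re * (r⁻¹*z)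
    = (2*normSq u + 4*r*((starRingEnd ℂ u')*u).re + 4*((starRingEnd ℂ A)*u).re * z)/r^2 := by
  obtain ⟨a1, a2⟩ := A
  obtain ⟨u1, u2⟩ := u
  obtain ⟨w1, w2⟩ := u'
  simp only [normSq_apply, div_re, div_im, add_re, add_im, sub_re, sub_im, mul_re, mul_im,
    ofReal_re, ofReal_im, conj_re, conj_im, normSq_ofReal, pow_two]
  field_simp
  ring

lemma normfd (x : R3) (hx : x ≠ 0) :
    HasFDerivAt (fun y : R3 => ‖y‖) (‖x‖⁻¹ • innerSL ℝ x) x := by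
  have hxn : (0:ℝ) < ‖x‖ := norm_pos_iff.mpr hx
  have h1 : HasFDerivAt (fun y : R3 => ‖y‖^2) (2 • (innerSL ℝ x)) x :=
    (hasStrictFDerivAt_norm_sq x).hasFDerivAt
  have h2 : HasDerivAt Real.sqrt (1 / (2 * Real.sqrt (‖x‖^2))) (‖x‖^2) :=
    Real.hasDerivAt_sqrt (by positivity)
  have h3 := h2.comp_hasFDerivAt x h1
  have hn : (Real.sqrt ∘ fun y : R3 => ‖y‖^2) = fun y : R3 => ‖y‖ := by
    funext y; simp [Real.sqrt_sq (norm_nonneg y)]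
  rw [hn] at h3
  refine h3.congr_fderiv ?_
  refine ContinuousLinearMap.ext fun d => ?_
  rw [Real.sqrt_sq (norm_nonneg x)]
  simp only [ContinuousLinearMap.smul_apply, smul_eq_mul, two_smul,
    ContinuousLinearMap.add_apply]
  field_simp
  ring

lemma hasFDerivAt_scomp {f : R3 → ℝ} {f' : R3 →L[ℝ] ℝ} {h : ℝ → ℂ} {h' : ℂ} {x : R3}
    (hh : HasDerivAt h h' (f x)) (hf : HasFDerivAt f f' x) :
    HasFDerivAt (fun y => h (f y)) (f'.smulRight h') x := by
  exact hh.hasFDerivAt.comp x hf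

lemma omega_deriv (ω : R3 → C2) (uu vv : ℝ → ℂ) (hu : Differentiable ℝ uu)
    (hv : Differentiable ℝ vv)
    (hωF : ∀ y : R3, y ≠ 0 → ω y = vv ‖y‖ • E0 + (uu ‖y‖ / ‖y‖) • S y)
    (x : R3) (hx : x ≠ 0) :
    fderiv ℝ ω x =
      ((‖x‖⁻¹ • innerSL ℝ x).smulRight (deriv vv ‖x‖)).smulRight E0
      + ((uu ‖x‖ / ‖x‖) • S
        + ((‖x‖⁻¹ • innerSL ℝ x).smulRight
            ((deriv uu ‖x‖ * ‖x‖ - uu ‖x‖)/(‖x‖:ℂ)^2)).smulRight (S x)) := by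
  have hr : (0:ℝ) < ‖x‖ := norm_pos_iff.mpr hx
  have hN := normfd x hx
  have hv' : HasDerivAt vv (deriv vv ‖x‖) ‖x‖ := (hv ‖x‖).hasDerivAt
  have hw : HasDerivAt (fun s => uu s / (s:ℂ)) ((deriv uu ‖x‖ * ‖x‖ - uu ‖x‖)/(‖x‖:ℂ)^2) ‖x‖ := by
    have h1 : HasDerivAt uu (deriv uu ‖x‖) ‖x‖ := (hu ‖x‖).hasDerivAt
    have h2 : HasDerivAt (fun s : ℝ => (s:ℂ)) 1 ‖x‖ := by
      simpa using (hasDerivAt_id ‖x‖).ofReal_comp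
    have := h1.div h2 (by exact_mod_cast hr.ne')
    rw [mul_one] at this
    exact this
  have hF : HasFDerivAt (fun y : R3 => vv ‖y‖ • E0 + (uu ‖y‖ / ‖y‖) • S y)
      (((‖x‖⁻¹ • innerSL ℝ x).smulRight (deriv vv ‖x‖)).smulRight E0
      + ((uu ‖x‖ / ‖x‖) • S
        + ((‖x‖⁻¹ • innerSL ℝ x).smulRight
            ((deriv uu ‖x‖ * ‖x‖ - uu ‖x‖)/(‖x‖:ℂ)^2)).smulRight (S x))) x := by
    have p1 : HasFDerivAt (fun y : R3 => vv ‖y‖ • E0)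
        (((‖x‖⁻¹ • innerSL ℝ x).smulRight (deriv vv ‖x‖)).smulRight E0) x :=
      (hasFDerivAt_scomp hv' hN).smul_const E0
    have p2c : HasFDerivAt (fun y : R3 => uu ‖y‖ / (‖y‖:ℂ))
        ((‖x‖⁻¹ • innerSL ℝ x).smulRight ((deriv uu ‖x‖ * ‖x‖ - uu ‖x‖)/(‖x‖:ℂ)^2)) x :=
      hasFDerivAt_scomp hw hN
    have p2 := p2c.smul (S.hasFDerivAt (x := x))
    exact p1.add p2
  have heq : ω =ᶠ[nhds x] (fun y : R3 => vv ‖y‖ • E0 + (uu ‖y‖ / ‖y‖) • S y) := by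
    filter_upwards [IsOpen.mem_nhds isOpen_compl_singleton hx] with y hy
    exact hωF y hy
  exact (hF.congr_of_eventuallyEq heq).fderiv


set_option maxHeartbeats 4000000 in
set_option maxRecDepth 100000 in
lemma pointwise (ω : R3 → C2) (uu vv : ℝ → ℂ) (hu : Differentiable ℝ uu)
    (hv : Differentiable ℝ vv)
    (hωF : ∀ y : R3, y ≠ 0 → ω y = vv ‖y‖ • E0 + (uu ‖y‖ / ‖y‖) • S y)
    (x : R3) (hx : x ≠ 0) :
    ‖sigmaGrad ω x‖^2 - ∑ k : Fin 3, ‖fderiv ℝ ω x (EuclideanSpace.single k 1)‖^2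
    = (2*normSq (uu ‖x‖) + 4*‖x‖*((starRingEnd ℂ (deriv uu ‖x‖)) * uu ‖x‖).re
       + 4*((starRingEnd ℂ (deriv vv ‖x‖)) * uu ‖x‖).re * (x 2)) / ‖x‖^2 := by
  have hr : (0:ℝ) < ‖x‖ := norm_pos_iff.mpr hx
  set r : ℝ := ‖x‖ with hrdef
  set A : ℂ := deriv vv r with hA
  set u : ℂ := uu r with hudef
  set u' : ℂ := deriv uu r with hu'def
  set C : ℂ := u / (r:ℂ) with hC
  set B : ℂ := (u' * (r:ℂ) - u)/(r:ℂ)^2 with hB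
  set p : ℝ := r⁻¹ * x 0 with hp
  set q : ℝ := r⁻¹ * x 1 with hq
  set t : ℝ := r⁻¹ * x 2 with ht
  have hfd : fderiv ℝ ω x =
      ((r⁻¹ • innerSL ℝ x).smulRight A).smulRight E0
      + (C • S + ((r⁻¹ • innerSL ℝ x).smulRight B).smulRight (S x)) := by
    rw [omega_deriv ω uu vv hu hv hωF x hx]
  have hinner : ∀ k : Fin 3, (inner ℝ x (EuclideanSpace.single k (1:ℝ)) : ℝ) = x k := by
    intro k; simp [EuclideanSpace.inner_single_right]
  have hcomp : ∀ k : Fin 3, ∀ j : Fin 2,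
      fderiv ℝ ω x (EuclideanSpace.single k 1) j
      = ↑(r⁻¹ * x k) * A * E0 j + C * (S (EuclideanSpace.single k 1) j)
        + ↑(r⁻¹ * x k) * B * (S x j) := by
    intro k j
    rw [hfd]
    simp only [ContinuousLinearMap.add_apply, ContinuousLinearMap.smulRight_apply,
      ContinuousLinearMap.smul_apply, innerSL_apply_apply, PiLp.add_apply, PiLp.smul_apply,
      smul_eq_mul, Complex.real_smul]
    rw [hinner k]
    push_cast
    ring
  have hSx0 : S x 0 = ((x 2 : ℝ) : ℂ) := by simp [S, Slin]
  have hSx1 : S x 1 = ((x 0 : ℝ) : ℂ) + I * ((x 1 : ℝ) : ℂ) := by simp [S, Slin]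
  have hE0 : E0 0 = 1 := by simp [E0, EuclideanSpace.single_apply]
  have hE1 : E0 1 = 0 := by simp [E0, EuclideanSpace.single_apply]
  have hS00 : S (EuclideanSpace.single 0 (1:ℝ)) 0 = 0 := by
    simp [S, Slin, EuclideanSpace.single_apply]
  have hS01 : S (EuclideanSpace.single 0 (1:ℝ)) 1 = 1 := by
    simp [S, Slin, EuclideanSpace.single_apply]
  have hS10 : S (EuclideanSpace.single 1 (1:ℝ)) 0 = 0 := by
    simp [S, Slin, EuclideanSpace.single_apply]
  have hS11 : S (EuclideanSpace.single 1 (1:ℝ)) 1 = I := by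
    simp [S, Slin, EuclideanSpace.single_apply]
  have hS20 : S (EuclideanSpace.single 2 (1:ℝ)) 0 = 1 := by
    simp [S, Slin, EuclideanSpace.single_apply]
  have hS21 : S (EuclideanSpace.single 2 (1:ℝ)) 1 = 0 := by
    simp [S, Slin, EuclideanSpace.single_apply]
  have h00 : fderiv ℝ ω x (EuclideanSpace.single 0 1) 0 = ↑p*A + ↑p*B*↑(x 2) := by
    rw [hcomp 0 0, hS00, hSx0, hE0]; ring
  have h01 : fderiv ℝ ω x (EuclideanSpace.single 0 1) 1
      = C + ↑p*B*(↑(x 0)+I*↑(x 1)) := by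
    rw [hcomp 0 1, hS01, hSx1, hE1]; ring
  have h10 : fderiv ℝ ω x (EuclideanSpace.single 1 1) 0 = ↑q*A + ↑q*B*↑(x 2) := by
    rw [hcomp 1 0, hS10, hSx0, hE0]; ring
  have h11 : fderiv ℝ ω x (EuclideanSpace.single 1 1) 1
      = I*C + ↑q*B*(↑(x 0)+I*↑(x 1)) := by
    rw [hcomp 1 1, hS11, hSx1, hE1]; ring
  have h20 : fderiv ℝ ω x (EuclideanSpace.single 2 1) 0 = ↑t*A + C + ↑t*B*↑(x 2) := by
    rw [hcomp 2 0, hS20, hSx0, hE0]; ring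
  have h21 : fderiv ℝ ω x (EuclideanSpace.single 2 1) 1 = ↑t*B*(↑(x 0)+I*↑(x 1)) := by
    rw [hcomp 2 1, hS21, hSx1, hE1]; ring
  have hsg : ∀ j : Fin 2, sigmaGrad ω x j
      = ∑ k : Fin 3, ∑ i : Fin 2, pauli k j i * (fderiv ℝ ω x (EuclideanSpace.single k 1) i) := by
    intro j
    show (∑ k : Fin 3, matApply (pauli k) (fderiv ℝ ω x (EuclideanSpace.single k 1))) j = _
    rw [WithLp.ofLp_sum, Finset.sum_apply]
    rfl
  have hs0 : sigmaGrad ω x 0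
      = (C + ↑p*B*(↑(x 0)+I*↑(x 1))) + (-I)*(I*C + ↑q*B*(↑(x 0)+I*↑(x 1)))
        + (↑t*A + C + ↑t*B*↑(x 2)) := by
    rw [hsg 0]
    simp only [Fin.sum_univ_three, Fin.sum_univ_two, pauli]
    rw [h00, h01, h10, h11, h20, h21]
    norm_num [Matrix.cons_val_zero, Matrix.cons_val_one, Matrix.head_cons]
    try ring
  have hs1 : sigmaGrad ω x 1
      = (↑p*A + ↑p*B*↑(x 2)) + I*(↑q*A + ↑q*B*↑(x 2)) - ↑t*B*(↑(x 0)+I*↑(x 1)) := by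
    rw [hsg 1]
    simp only [Fin.sum_univ_three, Fin.sum_univ_two, pauli]
    rw [h00, h01, h10, h11, h20, h21]
    norm_num [Matrix.cons_val_zero, Matrix.cons_val_one, Matrix.head_cons]
    try ring
  have hsum : x 0^2 + x 1^2 + x 2^2 = r^2 := by
    have h := EuclideanSpace.norm_eq x
    rw [hrdef, h, Real.sq_sqrt (by positivity)]
    simp [Fin.sum_univ_three, Real.norm_eq_abs, _root_.sq_abs]
  have hpqt : p^2 + q^2 + t^2 = 1 := by
    rw [hp, hq, ht]
    field_simp
    linarith [hsum]
  have hX0 : x 0 = p * r := by rw [hp]; field_simp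
  have hX1 : x 1 = q * r := by rw [hq]; field_simp
  have hz : x 2 = t * r := by rw [ht]; field_simp
  rw [normC2 (sigmaGrad ω x), Fin.sum_univ_three,
    normC2 (fderiv ℝ ω x (EuclideanSpace.single 0 1)),
    normC2 (fderiv ℝ ω x (EuclideanSpace.single 1 1)),
    normC2 (fderiv ℝ ω x (EuclideanSpace.single 2 1)),
    hs0, hs1, h00, h01, h10, h11, h20, h21]
  have hkey := key_alg A B C p q t (x 2) (x 0) (x 1) r hX0 hX1 hz hpqt
  have hbr : 4*r*((starRingEnd ℂ B)*C).re + 6*normSq C + 4*((starRingEnd ℂ A)*C).re * t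
      = (2*normSq u + 4*r*((starRingEnd ℂ u')*u).re + 4*((starRingEnd ℂ A)*u).re * (x 2))/r^2 := by
    rw [hC, hB, ht]
    exact bridge u u' A (x 2) r hr.ne'
  linear_combination hkey + hbr

end SigmaAux

open SigmaAux Complex in
/-- for `ω` of the symmetric form
`ω(x) = v(r)(1,0)ᵀ + u(r)(cos θ, sin θ e^{iφ})ᵀ`,
one has `‖σ·∇ω‖²_{L²(B(0,R))} ≥ ‖∇ω‖²_{L²(B(0,R))}`. -/
theorem sigmaGrad_dominates_grad_on_ball
    (R : ℝ) (hR : 0 < R) (u v : ℝ → ℂ) (ω : R3 → C2)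
    (hω : Differentiable ℝ ω)
    (hform : ∀ x : R3, x ≠ 0 →
      ω x 0 = v ‖x‖ + u ‖x‖ * (((x 2 : ℝ) : ℂ) / (‖x‖ : ℂ)) ∧
      ω x 1 = u ‖x‖ * ((((x 0 : ℝ) : ℂ) + Complex.I * ((x 1 : ℝ) : ℂ)) / (‖x‖ : ℂ)))
    (h1 : IntegrableOn (fun x => ‖sigmaGrad ω x‖ ^ 2) (Metric.ball (0:R3) R) volume)
    (h2 : IntegrableOn
      (fun x => ∑ k : Fin 3, ‖fderiv ℝ ω x (EuclideanSpace.single k 1)‖ ^ 2)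
      (Metric.ball (0:R3) R) volume) :
    (∫ x in Metric.ball (0:R3) R,
        ∑ k : Fin 3, ‖fderiv ℝ ω x (EuclideanSpace.single k 1)‖ ^ 2)
      ≤ ∫ x in Metric.ball (0:R3) R, ‖sigmaGrad ω x‖ ^ 2 := by
  classical
  set e0 : R3 := EuclideanSpace.single 0 (1:ℝ) with he0
  set uu : ℝ → ℂ := fun s => ω (s • e0) 1 with huu_def
  set vv : ℝ → ℂ := fun s => ω (s • e0) 0 with hvv_def
  have hproj : ∀ j : Fin 2, Differentiable ℝ (fun z : C2 => z j) := by
    intro j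
    exact ((EuclideanSpace.proj j : C2 →L[ℂ] ℂ).restrictScalars ℝ).differentiable
  have hsmul : Differentiable ℝ (fun s : ℝ => s • e0) := by
    exact (differentiable_id.smul_const e0)
  have hu : Differentiable ℝ uu := (hproj 1).comp (hω.comp hsmul)
  have hv : Differentiable ℝ vv := (hproj 0).comp (hω.comp hsmul)
  have hSy0 : ∀ y : R3, S y 0 = ((y 2 : ℝ) : ℂ) := by intro y; simp [S, Slin]
  have hSy1 : ∀ y : R3, S y 1 = ((y 0 : ℝ) : ℂ) + I * ((y 1 : ℝ) : ℂ) := by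
    intro y; simp [S, Slin]
  have hE0 : E0 0 = 1 := by simp [E0, EuclideanSpace.single_apply]
  have hE1 : E0 1 = 0 := by simp [E0, EuclideanSpace.single_apply]
  have hωF : ∀ y : R3, y ≠ 0 → ω y = vv ‖y‖ • E0 + (uu ‖y‖ / ‖y‖) • S y := by
    intro y hy
    have hr : (0:ℝ) < ‖y‖ := norm_pos_iff.mpr hy
    have hrC : ((‖y‖ : ℝ) : ℂ) ≠ 0 := by exact_mod_cast hr.ne'
    have hre0 : (‖y‖ • e0 : R3) ≠ 0 := by
      rw [← norm_ne_zero_iff, norm_smul, he0, EuclideanSpace.norm_single]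
      simp [hr.ne']
    have hnre0 : ‖(‖y‖ • e0 : R3)‖ = ‖y‖ := by
      rw [norm_smul, he0, EuclideanSpace.norm_single]
      simp [abs_of_pos hr]
    have hc0 : ((‖y‖ • e0 : R3) 0 : ℝ) = ‖y‖ := by
      simp [he0, PiLp.smul_apply, EuclideanSpace.single_apply]
    have hc1 : ((‖y‖ • e0 : R3) 1 : ℝ) = 0 := by
      simp [he0, PiLp.smul_apply, EuclideanSpace.single_apply]
    have hc2 : ((‖y‖ • e0 : R3) 2 : ℝ) = 0 := by
      simp [he0, PiLp.smul_apply, EuclideanSpace.single_apply]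
    obtain ⟨hA0, hA1⟩ := hform (‖y‖ • e0) hre0
    simp only [hnre0, hc0, hc1, hc2] at hA0 hA1
    have huuv : uu ‖y‖ = u ‖y‖ := by
      rw [huu_def]
      simp only []
      rw [hA1]
      push_cast
      field_simp
      simp
    have hvvv : vv ‖y‖ = v ‖y‖ := by
      rw [hvv_def]
      simp only []
      rw [hA0]
      simp
    obtain ⟨hB0, hB1⟩ := hform y hy
    ext j
    fin_cases j
    · show ω y 0 = (vv ‖y‖ • E0 + (uu ‖y‖ / ‖y‖) • S y) 0
      rw [hB0, PiLp.add_apply, PiLp.smul_apply, PiLp.smul_apply, hE0, hSy0,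
        smul_eq_mul, smul_eq_mul, huuv, hvvv]
      field_simp
    · show ω y 1 = (vv ‖y‖ • E0 + (uu ‖y‖ / ‖y‖) • S y) 1
      rw [hB1, PiLp.add_apply, PiLp.smul_apply, PiLp.smul_apply, hE1, hSy1,
        smul_eq_mul, smul_eq_mul, huuv]
      field_simp
      try ring
  -- the pointwise difference function
  set Φ : R3 → ℝ := fun x => ‖sigmaGrad ω x‖^2
      - ∑ k : Fin 3, ‖fderiv ℝ ω x (EuclideanSpace.single k 1)‖^2 with hΦdef
  have hΦint : IntegrableOn Φ (Metric.ball (0:R3) R) volume := h1.sub h2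
  -- goal reduction
  rw [← sub_nonneg, ← integral_sub h1 h2]
  have hgoal : (∫ x in Metric.ball (0:R3) R, Φ x) =
      ∫ x in Metric.ball (0:R3) R,
        (‖sigmaGrad ω x‖ ^ 2 - ∑ k : Fin 3, ‖fderiv ℝ ω x (EuclideanSpace.single k 1)‖ ^ 2) := rfl
  rw [← hgoal]
  -- reflection
  have hMP : MeasurePreserving (fun x : R3 => -x) volume volume :=
    Measure.measurePreserving_neg volume
  have hemb : MeasurableEmbedding (fun x : R3 => -x) :=
    (Homeomorph.neg R3).measurableEmbedding
  have hpre : (fun x : R3 => -x) ⁻¹' (Metric.ball (0:R3) R) = Metric.ball (0:R3) R := by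
    ext z
    simp [Metric.mem_ball, dist_zero_right]
  have hrefl : (∫ x in Metric.ball (0:R3) R, Φ (-x)) = ∫ x in Metric.ball (0:R3) R, Φ x := by
    have := hMP.setIntegral_preimage_emb hemb Φ (Metric.ball (0:R3) R)
    rwa [hpre] at this
  have hΦnegint : IntegrableOn (fun x => Φ (-x)) (Metric.ball (0:R3) R) volume := by
    have h' := (hMP.integrableOn_comp_preimage hemb (f := Φ)
      (s := Metric.ball (0:R3) R)).mpr hΦint
    rwa [hpre] at h'
  have havg : (∫ x in Metric.ball (0:R3) R, Φ x)
      = ∫ x in Metric.ball (0:R3) R, (Φ x + Φ (-x))/2 := by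
    rw [integral_div, integral_add hΦint hΦnegint, hrefl]
    ring
  -- radial function
  set G : ℝ → ℝ := fun s => 2*normSq (uu s) + 4*s*((starRingEnd ℂ (deriv uu s)) * uu s).re
    with hGdef
  set f : ℝ → ℝ := Set.indicator (Set.Ioo 0 R) (fun s => G s / s^2) with hfdef
  have hptw : ∀ x : R3, x ≠ 0 → Φ x
      = (2*normSq (uu ‖x‖) + 4*‖x‖*((starRingEnd ℂ (deriv uu ‖x‖)) * uu ‖x‖).re
         + 4*((starRingEnd ℂ (deriv vv ‖x‖)) * uu ‖x‖).re * (x 2)) / ‖x‖^2 :=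
    fun x hx => pointwise ω uu vv hu hv hωF x hx
  have havg2 : ∀ x : R3, x ∈ Metric.ball (0:R3) R → x ≠ 0 → (Φ x + Φ (-x))/2 = f ‖x‖ := by
    intro x hmem hx
    have hr : (0:ℝ) < ‖x‖ := norm_pos_iff.mpr hx
    have hxR : ‖x‖ < R := mem_ball_zero_iff.mp hmem
    have hnx : ‖(-x : R3)‖ = ‖x‖ := norm_neg x
    have hneg2 : ((-x : R3) 2 : ℝ) = -(x 2) := rfl
    have hp1 := hptw x hx
    have hp2 := hptw (-x) (by simpa using hx)
    rw [hnx, hneg2] at hp2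
    rw [hfdef, Set.indicator_of_mem (by exact ⟨hr, hxR⟩ : ‖x‖ ∈ Set.Ioo 0 R)]
    rw [hp1, hp2, hGdef]
    field_simp
    ring
  have hcongr : (∫ x in Metric.ball (0:R3) R, (Φ x + Φ (-x))/2)
      = ∫ x : R3, f ‖x‖ := by
    rw [← integral_indicator Metric.isOpen_ball.measurableSet]
    apply integral_congr_ae
    have hzero : (volume : Measure R3) {0} = 0 := measure_singleton 0
    filter_upwards [compl_mem_ae_iff.mpr hzero] with x hx
    simp only [Set.mem_compl_iff, Set.mem_singleton_iff] at hx
    by_cases hmem : x ∈ Metric.ball (0:R3) R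
    · rw [Set.indicator_of_mem hmem]
      exact havg2 x hmem hx
    · rw [Set.indicator_of_notMem hmem]
      have hxR : R ≤ ‖x‖ := by
        by_contra hlt
        exact hmem (mem_ball_zero_iff.mpr (not_le.mp hlt))
      rw [hfdef, Set.indicator_of_notMem (by simp only [Set.mem_Ioo, not_and]; intro _; linarith)]
  -- polar coordinates
  haveI : Nontrivial R3 := by infer_instance
  have hdim : Module.finrank ℝ R3 = 3 := by
    simpa using finrank_euclideanSpace_fin (𝕜 := ℝ) (n := 3)
  have hpolar := integral_fun_norm_addHaar (volume : Measure R3) f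
  rw [hdim] at hpolar
  -- 1D analysis
  have hind : ∀ y : ℝ, y ∈ Set.Ioi (0:ℝ) →
      y^(3-1) • f y = Set.indicator (Set.Ioo 0 R) G y := by
    intro y hy
    have hy0 : (0:ℝ) < y := hy
    by_cases hmem : y ∈ Set.Ioo 0 R
    · rw [hfdef, Set.indicator_of_mem hmem, Set.indicator_of_mem hmem]
      have : y ≠ 0 := hy0.ne'
      simp only [smul_eq_mul]
      field_simp
      try ring
    · rw [hfdef, Set.indicator_of_notMem hmem, Set.indicator_of_notMem hmem]
      simp
  have hIoi : (∫ y in Set.Ioi (0:ℝ), y^(3-1) • f y) = ∫ y in Set.Ioo 0 R, G y := by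
    rw [setIntegral_congr_fun measurableSet_Ioi hind, integral_indicator measurableSet_Ioo,
      Measure.restrict_restrict measurableSet_Ioo]
    congr 1
    rw [Set.inter_eq_left.mpr]
    intro y hy
    exact hy.1
  have hG0 : (0:ℝ) ≤ ∫ y in Set.Ioo 0 R, G y := by
    by_cases hInt : IntegrableOn G (Set.Ioo 0 R) volume
    · -- FTC
      have hφd : ∀ s : ℝ, HasDerivAt (fun s => 2*s*normSq (uu s)) (G s) s := by
        intro s
        have hus : HasDerivAt uu (deriv uu s) s := (hu s).hasDerivAt
        have hre : HasDerivAt (fun s => (uu s).re) ((deriv uu s).re) s := by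
          have := (Complex.reCLM.hasFDerivAt (x := uu s)).comp_hasDerivAt s hus
          exact this
        have him : HasDerivAt (fun s => (uu s).im) ((deriv uu s).im) s := by
          have := (Complex.imCLM.hasFDerivAt (x := uu s)).comp_hasDerivAt s hus
          exact this
        have hns : HasDerivAt (fun s => normSq (uu s))
            (2*(uu s).re*(deriv uu s).re + 2*(uu s).im*(deriv uu s).im) s := by
          have h := ((hre.mul hre).add (him.mul him))
          have heq : (fun s => (uu s).re * (uu s).re + (uu s).im * (uu s).im)
              = fun s => normSq (uu s) := by
            funext s; rw [normSq_apply]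
          change HasDerivAt (fun s => (uu s).re * (uu s).re + (uu s).im * (uu s).im) _ s at h
          rw [heq] at h
          convert h using 1
          ring
        have h2 := ((hasDerivAt_id s).const_mul (2:ℝ)).mul hns
        refine HasDerivAt.congr_deriv h2 ?_
        simp only [hGdef, normSq_apply, Complex.mul_re, Complex.conj_re, Complex.conj_im, mul_one, id_eq, one_mul]
        ring
      have hII : IntervalIntegrable G volume 0 R := by
        rw [intervalIntegrable_iff, Set.uIoc_of_le hR.le]
        exact hInt.congr_set_ae Ioo_ae_eq_Ioc.symm
      have hftc := intervalIntegral.integral_eq_sub_of_hasDerivAt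
        (fun s _ => hφd s) hII
      have hval : (∫ s in (0:ℝ)..R, G s) = 2*R*normSq (uu R) := by
        rw [hftc]; ring_nf
      have hIoo : (∫ y in Set.Ioo 0 R, G y) = ∫ s in (0:ℝ)..R, G s := by
        rw [intervalIntegral.integral_of_le hR.le, ← integral_Ioc_eq_integral_Ioo]
      rw [hIoo, hval]
      exact mul_nonneg (by linarith) (normSq_nonneg _)
    · rw [integral_undef hInt]
  -- put everything together
  rw [havg, hcongr, hpolar, hIoi]
  have hc : (0:ℝ) ≤ (volume (Metric.ball (0:R3) 1)).toReal := ENNReal.toReal_nonneg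
  exact nsmul_nonneg (smul_nonneg hc hG0) 3
end
end
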